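/- arXiv:2509.01056 — 2 statements merged into one kernel-verified Lean document; each statement's English description precedes it below -/
import Mathlib

section
/- Let C be an additive category with cokernels and a progenerator P, and set R = C(P,P)^op, the opposite ring of the endomorphism ring of P. Then the functor C(P,−): C → R-mod, sending an object X to the left R-module C(P,X) (with R acting via composition by endomorphisms of P), is well defined, fully faithful and dense; hence it is an equivalence of categories. -/
/-!
Statement 1. Let `C` be an additive category with cokernels and a progenerator `P`, and set
`R = C(P,P)ᵒᵖ` (realized below as `End (Opposite.op P)`). Then the functor
`C(P,−) : C → R-mod` (realized as `preadditiveCoyonedaObj (Opposite.op P)`), sending an object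
`X` to the left `R`-module `C(P,X)`, is well defined (i.e. takes values in finitely presented
`R`-modules), fully faithful and dense onto the finitely presented `R`-modules; hence it induces
an equivalence of categories `C ≌ R-mod`.
-/

open CategoryTheory CategoryTheory.Limits

universe v u

namespace PaperDefs

variable {C : Type u} [Category.{v} C] [Preadditive C]

/-- `g` is a cokernel of `f`, i.e. the sequence `X → Y → Z → 0` is right-exact. -/
def IsCokernelOf {X Y Z : C} (f : X ⟶ Y) (g : Y ⟶ Z) : Prop :=
  f ≫ g = 0 ∧ ∀ ⦃W : C⦄ (h : Y ⟶ W), f ≫ h = 0 → ∃! u : Z ⟶ W, g ≫ u = h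

/-- The category `C` has cokernels: every morphism admits a cokernel. -/
def HasCokernelsP (C : Type u) [Category.{v} C] [Preadditive C] : Prop :=
  ∀ ⦃X Y : C⦄ (f : X ⟶ Y), ∃ (Z : C) (g : Y ⟶ Z), IsCokernelOf f g

/-- `Q` belongs to `add U`: it is a direct summand of a finite direct sum of objects of `U`. -/
def MemAdd (U : Set C) (Q : C) : Prop :=
  ∃ (k : ℕ) (F : Fin k → C) (_ : ∀ i, F i ∈ U) (s : ∀ i, Q ⟶ F i) (r : ∀ i, F i ⟶ Q),
    (∑ i, s i ≫ r i) = 𝟙 Q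

/-- `P` is projective: `C(P, -)` sends right-exact sequences in `C` to exact sequences
of abelian groups. -/
def PaperProjective (P : C) : Prop :=
  ∀ ⦃X Y Z : C⦄ (f : X ⟶ Y) (g : Y ⟶ Z), IsCokernelOf f g →
    (∀ u : P ⟶ Z, ∃ v : P ⟶ Y, v ≫ g = u) ∧
    (∀ v : P ⟶ Y, v ≫ g = 0 → ∃ w : P ⟶ X, w ≫ f = v)

/-- `P` is a progenerator: a projective object such that every object admits
a right-exact presentation by objects of `add P`. -/
def IsProgenerator (P : C) : Prop :=
  PaperProjective P ∧
    ∀ X : C, ∃ (P₁ P₀ : C) (f : P₁ ⟶ P₀) (g : P₀ ⟶ X),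
      MemAdd {P} P₁ ∧ MemAdd {P} P₀ ∧ IsCokernelOf f g

/-- The category of finitely presented left `R`-modules. -/
def FPModuleCat (R : Type v) [Ring R] :=
  CategoryTheory.ObjectProperty.FullSubcategory (fun M : ModuleCat.{v} R => Module.FinitePresentation R M)

instance (R : Type v) [Ring R] : Category (FPModuleCat R) :=
  CategoryTheory.ObjectProperty.FullSubcategory.category _

instance mulActionLeftOp {X : Cᵒᵖ} {Y : C} : MulAction (End X) (Opposite.unop X ⟶ Y) where
  smul r f := r.unop ≫ f
  one_smul := Category.id_comp
  mul_smul _ _ _ := Category.assoc _ _ _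

instance moduleEndLeftOp {X : Cᵒᵖ} {Y : C} : Module (End X) (Opposite.unop X ⟶ Y) where
  smul_add _ _ _ := Preadditive.comp_add _ _ _ _ _ _
  smul_zero _ := Limits.comp_zero
  add_smul _ _ _ := Preadditive.add_comp _ _ _ _ _ _
  zero_smul _ := Limits.zero_comp

def preadditiveCoyonedaObj (X : Cᵒᵖ) : C ⥤ ModuleCat.{v} (End X) where
  obj Y := ModuleCat.of _ (Opposite.unop X ⟶ Y)
  map f := ModuleCat.ofHom
    { toFun := fun g => g ≫ f
      map_add' := fun _ _ => Preadditive.add_comp _ _ _ _ _ _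
      map_smul' := fun _ _ => Category.assoc _ _ _ }

end PaperDefs


namespace Aux
open PaperDefs Opposite
set_option synthInstance.maxHeartbeats 1000000
set_option maxHeartbeats 1000000

variable {C : Type u} [Category.{v} C] [Preadditive C]

instance modHom (P X : C) : Module (End (op P)) (P ⟶ X) := PaperDefs.moduleEndLeftOp (X := op P)

lemma smulh {P X : C} (r : End (op P)) (u : P ⟶ X) : r • u = r.unop ≫ u := rfl

/-- view a morphism `P ⟶ P` as an element of `End (op P)`. -/
def toR {P : C} (a : P ⟶ P) : End (op P) := Quiver.Hom.op a

@[simp] lemma toR_unop {P : C} (a : P ⟶ P) : (toR a).unop = a := rfl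

lemma op_comp_smul {P X : C} (a : P ⟶ P) (u : P ⟶ X) : toR a • u = a ≫ u := rfl

lemma mul_unop {P : C} (r s : End (op P)) : (r * s).unop = r.unop ≫ s.unop := rfl

/-- precompose-with-family linear map `c ↦ ∑ i, (c i).unop ≫ r i`. -/
def rho {P P₀ : C} {k : ℕ} (r : Fin k → (P ⟶ P₀)) :
    (Fin k → End (op P)) →ₗ[End (op P)] (P ⟶ P₀) where
  toFun c := ∑ i, (c i).unop ≫ r i
  map_add' a b := by
    rw [← Finset.sum_add_distrib]
    exact Finset.sum_congr rfl fun i _ => by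
      show ((a i + b i) : End (op P)).unop ≫ r i = _
      rw [unop_add, Preadditive.add_comp]
  map_smul' x c := by
    simp only [RingHom.id_apply, smulh, Preadditive.comp_sum]
    exact Finset.sum_congr rfl fun i _ => by
      show ((x * c i) : End (op P)).unop ≫ r i = _
      rw [mul_unop, Category.assoc]

/-- the section `v ↦ (i ↦ (v ≫ s i).op)`. -/
def sig {P P₀ : C} {k : ℕ} (s : Fin k → (P₀ ⟶ P)) :
    (P ⟶ P₀) →ₗ[End (op P)] (Fin k → End (op P)) where
  toFun v i := toR (v ≫ s i)
  map_add' a b := by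
    funext i
    show toR ((a + b) ≫ s i) = toR (a ≫ s i) + toR (b ≫ s i)
    apply Quiver.Hom.unop_inj
    show (a + b) ≫ s i = (toR (a ≫ s i)).unop + (toR (b ≫ s i)).unop
    simp [Preadditive.add_comp]
  map_smul' x v := by
    funext i
    show toR ((x • v) ≫ s i) = x * toR (v ≫ s i)
    apply Quiver.Hom.unop_inj
    rw [mul_unop, smulh]
    simp

/-- postcomposition linear map. -/
def postc (P : C) {Y Z : C} (g : Y ⟶ Z) : (P ⟶ Y) →ₗ[End (op P)] (P ⟶ Z) where
  toFun u := u ≫ g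
  map_add' a b := Preadditive.add_comp _ _ _ _ _ _
  map_smul' x u := by simp [smulh]

@[simp] lemma rho_apply {P P₀ : C} {k : ℕ} (r : Fin k → (P ⟶ P₀)) (c : Fin k → End (op P)) :
    rho r c = ∑ i, (c i).unop ≫ r i := rfl
@[simp] lemma sig_apply {P P₀ : C} {k : ℕ} (s : Fin k → (P₀ ⟶ P)) (v : P ⟶ P₀) (i : Fin k) :
    sig s v i = toR (v ≫ s i) := rfl
@[simp] lemma postc_apply {P Y Z : C} (g : Y ⟶ Z) (u : P ⟶ Y) : postc P g u = u ≫ g := rfl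

lemma rho_sig {P P₀ : C} {k : ℕ} {s : Fin k → (P₀ ⟶ P)} {r : Fin k → (P ⟶ P₀)}
    (hsr : ∑ i, s i ≫ r i = 𝟙 P₀) (v : P ⟶ P₀) : rho r (sig s v) = v := by
  simp only [rho_apply, sig_apply, toR_unop, Category.assoc]
  rw [← Preadditive.comp_sum, hsr, Category.comp_id]


section Main
variable {C : Type u} [Category.{v} C] [Preadditive C]

lemma memAdd_exists {P Q : C} (h : MemAdd ({P} : Set C) Q) :
    ∃ (k : ℕ) (s : Fin k → (Q ⟶ P)) (r : Fin k → (P ⟶ Q)), ∑ i, s i ≫ r i = 𝟙 Q := by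
  obtain ⟨k, F, hF, s, r, hsr⟩ := h
  simp only [Set.mem_singleton_iff] at hF
  refine ⟨k, fun i => s i ≫ eqToHom (hF i), fun i => eqToHom (hF i).symm ≫ r i, ?_⟩
  rw [← hsr]
  refine Finset.sum_congr rfl fun i _ => ?_
  simp

lemma coker_cancel {X Y Z W : C} {f : X ⟶ Y} {g : Y ⟶ Z} (hc : IsCokernelOf f g)
    {a b : Z ⟶ W} (hab : g ≫ a = g ≫ b) : a = b := by
  obtain ⟨u, -, hu⟩ := hc.2 (g ≫ a) (by rw [← Category.assoc, hc.1, Limits.zero_comp])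
  exact (hu a rfl).trans (hu b hab.symm).symm

lemma sum_factor {Z P₀ Q : C} {k : ℕ} {s : Fin k → (P₀ ⟶ Q)} {r : Fin k → (Q ⟶ P₀)}
    (hsr : ∑ i, s i ≫ r i = 𝟙 P₀) (u : Z ⟶ P₀) : ∑ i, (u ≫ s i) ≫ r i = u := by
  simp only [Category.assoc]
  rw [← Preadditive.comp_sum, hsr, Category.comp_id]

lemma comp_eq_sum {P₀ Q X Y : C} {k : ℕ} {s : Fin k → (P₀ ⟶ Q)} {r : Fin k → (Q ⟶ P₀)}
    (hsr : ∑ i, s i ≫ r i = 𝟙 P₀) (g : P₀ ⟶ X) (f : X ⟶ Y) :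
    g ≫ f = ∑ i, s i ≫ ((r i ≫ g) ≫ f) := by
  conv_lhs => rw [← Category.id_comp g, ← hsr]
  simp only [Preadditive.sum_comp, Category.assoc]

variable {P : C}

/-- Faithfulness input. -/
lemma eq_of_comp_eq (hP : IsProgenerator P) {X Y : C} {f f' : X ⟶ Y}
    (h : ∀ u : P ⟶ X, u ≫ f = u ≫ f') : f = f' := by
  obtain ⟨P₁, P₀, f₁, g, h₁, h₀, hc⟩ := hP.2 X
  obtain ⟨k, s, r, hsr⟩ := memAdd_exists h₀
  refine coker_cancel hc ?_
  rw [comp_eq_sum hsr g f, comp_eq_sum hsr g f']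
  exact Finset.sum_congr rfl fun i _ => by rw [h]

lemma linear_pull {X Y : C} (φ : (P ⟶ X) →ₗ[End (op P)] (P ⟶ Y)) (a : P ⟶ P) (u : P ⟶ X) :
    φ (a ≫ u) = a ≫ φ u := by
  rw [← op_comp_smul a u, map_smul φ, op_comp_smul]

/-- Fullness input. -/
lemma exists_hom_of_linear (hP : IsProgenerator P) {X Y : C}
    (φ : (P ⟶ X) →ₗ[End (op P)] (P ⟶ Y)) : ∃ f : X ⟶ Y, ∀ u : P ⟶ X, u ≫ f = φ u := by
  obtain ⟨P₁, P₀, f₁, g, h₁, h₀, hc⟩ := hP.2 X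
  obtain ⟨k, s, r, hsr⟩ := memAdd_exists h₀
  obtain ⟨m, s', r', hsr'⟩ := memAdd_exists h₁
  set h₀map : P₀ ⟶ Y := ∑ i, s i ≫ φ (r i ≫ g) with hh₀
  have key : ∀ u : P ⟶ P₀, u ≫ h₀map = φ (u ≫ g) := by
    intro u
    rw [hh₀, Preadditive.comp_sum]
    have e1 : ∀ i : Fin k, u ≫ s i ≫ φ (r i ≫ g) = φ (((u ≫ s i) ≫ r i) ≫ g) := by
      intro i
      rw [Category.assoc, linear_pull φ (u ≫ s i) (r i ≫ g), Category.assoc]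
    rw [Finset.sum_congr rfl fun i _ => e1 i, ← map_sum, ← Preadditive.sum_comp,
      sum_factor hsr u]
  have hf₁ : f₁ ≫ h₀map = 0 := by
    rw [comp_eq_sum hsr' f₁ h₀map]
    refine Finset.sum_eq_zero fun j _ => ?_
    rw [key (r' j ≫ f₁), Category.assoc, hc.1, Limits.comp_zero, map_zero, Limits.comp_zero]
  obtain ⟨f, hf, -⟩ := hc.2 h₀map hf₁
  refine ⟨f, fun u => ?_⟩
  obtain ⟨v, hv⟩ := (hP.1 f₁ g hc).1 u
  rw [← hv, Category.assoc, hf, key]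

/-- Finite presentation of `Hom(P, X)`. -/
lemma fp_hom (hP : IsProgenerator P) (X : C) :
    Module.FinitePresentation (End (op P)) (P ⟶ X) := by
  obtain ⟨P₁, P₀, f₁, g, h₁, h₀, hc⟩ := hP.2 X
  obtain ⟨k, s, r, hsr⟩ := memAdd_exists h₀
  obtain ⟨m, s', r', hsr'⟩ := memAdd_exists h₁
  set R := End (op P) with hR
  set l : (Fin k → R) →ₗ[R] (P ⟶ X) := (postc P g).comp (rho r) with hl
  have lap : ∀ c, l c = rho r c ≫ g := fun _ => rfl
  have lsurj : Function.Surjective l := by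
    intro u
    obtain ⟨v, hv⟩ := (hP.1 f₁ g hc).1 u
    exact ⟨sig s v, by rw [lap, rho_sig hsr, hv]⟩
  set e : (Fin k → R) →ₗ[R] (Fin k → R) := (sig s).comp (rho r) with he
  have eap : ∀ c, e c = sig s (rho r c) := fun _ => rfl
  set S : Set (Fin k → R) :=
    (Set.range fun i : Fin k => Pi.single i 1 - e (Pi.single i 1)) ∪
      (Set.range fun j : Fin m => sig s (r' j ≫ f₁)) with hS
  have hker : LinearMap.ker l = Submodule.span R S := by
    apply le_antisymm
    · intro c hc'
      have hc0 : rho r c ≫ g = 0 := hc'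
      obtain ⟨w, hw⟩ := (hP.1 f₁ g hc).2 (rho r c) hc0
      have hsum : ∑ j, toR (w ≫ s' j) • sig s (r' j ≫ f₁) = e c := by
        rw [eap]
        calc ∑ j, toR (w ≫ s' j) • sig s (r' j ≫ f₁)
            = ∑ j, sig s (toR (w ≫ s' j) • (r' j ≫ f₁)) :=
              Finset.sum_congr rfl fun j _ => (map_smul _ _ _).symm
          _ = sig s (∑ j, ((w ≫ s' j) ≫ r' j) ≫ f₁) := by
              rw [← map_sum]
              refine congrArg _ (Finset.sum_congr rfl fun j _ => ?_)
              simp only [op_comp_smul, Category.assoc]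
          _ = sig s (rho r c) := by
              rw [← Preadditive.sum_comp, sum_factor hsr' w, hw]
      have hdecomp : c = (c - e c) + ∑ j, toR (w ≫ s' j) • sig s (r' j ≫ f₁) := by
        rw [hsum]; abel
      rw [hdecomp]
      refine Submodule.add_mem _ ?_ (Submodule.sum_mem _ fun j _ =>
        Submodule.smul_mem _ _ (Submodule.subset_span (Or.inr ⟨j, rfl⟩)))
      have hc1 : c = ∑ i, c i • (Pi.single i 1 : Fin k → R) := by
        funext i'
        rw [Finset.sum_apply]
        simp [Pi.single_apply, Finset.sum_ite_eq']
      have : c - e c = ∑ i, c i • ((Pi.single i 1 : Fin k → R) - e (Pi.single i 1)) := by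
        conv_lhs => rw [hc1]
        rw [map_sum, ← Finset.sum_sub_distrib]
        exact Finset.sum_congr rfl fun i _ => by rw [map_smul]; exact (smul_sub (c i) (Pi.single i (1 : R) : Fin k → R) (e (Pi.single i 1))).symm
      rw [this]
      exact Submodule.sum_mem _ fun i _ =>
        Submodule.smul_mem _ _ (Submodule.subset_span (Or.inl ⟨i, rfl⟩))
    · rw [Submodule.span_le]
      rintro c (⟨i, rfl⟩ | ⟨j, rfl⟩) <;> simp only [SetLike.mem_coe, LinearMap.mem_ker]
      · rw [map_sub, lap, lap, eap, rho_sig hsr, sub_self]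
      · rw [lap, rho_sig hsr, Category.assoc, hc.1, Limits.comp_zero]
  exact Module.finitePresentation_of_surjective l lsurj
    (hker ▸ Submodule.fg_span (Set.Finite.union (Set.finite_range _) (Set.finite_range _)))

end Main

section EssSurj
variable {C : Type u} [Category.{v} C] [Preadditive C] [HasFiniteBiproducts C] {P : C}

lemma sig_rho_biprod {k : ℕ} (c : Fin k → End (op P)) :
    sig (fun i => biproduct.π (fun _ : Fin k => P) i) (rho (fun i => biproduct.ι (fun _ : Fin k => P) i) c) = c := by
  funext i
  apply Quiver.Hom.unop_inj
  simp only [sig_apply, rho_apply, toR_unop, Preadditive.sum_comp, Category.assoc,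
    biproduct.ι_π]
  rw [Finset.sum_eq_single i]
  · simp
  · intro j _ hj
    rw [dif_neg hj, Limits.comp_zero]
  · intro h; exact absurd (Finset.mem_univ i) h

lemma ess_surj (hC : HasCokernelsP C) (hP : IsProgenerator P)
    (M : Type v) [AddCommGroup M] [Module (End (op P)) M]
    [Module.FinitePresentation (End (op P)) M] :
    ∃ X : C, Nonempty ((P ⟶ X) ≃ₗ[End (op P)] M) := by
  classical
  set R := End (op P) with hR
  obtain ⟨n, mv, hmv⟩ := Module.Finite.exists_fin (R := R) (M := M)
  set π : (Fin n → R) →ₗ[R] M :=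
    { toFun := fun c => ∑ i, c i • mv i
      map_add' := fun a b => by simp [add_smul, Finset.sum_add_distrib]
      map_smul' := fun x c => by simp [mul_smul, Finset.smul_sum] } with hπdef
  have hπ : Function.Surjective π := by
    intro x
    have hx : x ∈ Submodule.span R (Set.range mv) := hmv ▸ Submodule.mem_top
    obtain ⟨c, hcx⟩ := (Submodule.mem_span_range_iff_exists_fun R).1 hx
    exact ⟨c, hcx⟩
  have hkfg : (LinearMap.ker π).FG := Module.FinitePresentation.fg_ker π hπ
  obtain ⟨m, y, hy⟩ := Submodule.fg_iff_exists_fin_generating_family.1 hkfg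
  set ι : Fin n → (P ⟶ ⨁ (fun _ : Fin n => P)) := fun i => biproduct.ι (fun _ : Fin n => P) i with hι
  set pr : Fin n → ((⨁ (fun _ : Fin n => P)) ⟶ P) := fun i => biproduct.π (fun _ : Fin n => P) i with hpr
  set ι' : Fin m → (P ⟶ ⨁ (fun _ : Fin m => P)) := fun j => biproduct.ι (fun _ : Fin m => P) j with hι'
  set pr' : Fin m → ((⨁ (fun _ : Fin m => P)) ⟶ P) := fun j => biproduct.π (fun _ : Fin m => P) j with hpr'
  have hsr : ∑ i, pr i ≫ ι i = 𝟙 (⨁ (fun _ : Fin n => P)) := biproduct.total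
  have hsr' : ∑ j, pr' j ≫ ι' j = 𝟙 (⨁ (fun _ : Fin m => P)) := biproduct.total
  set f : (⨁ (fun _ : Fin m => P)) ⟶ ⨁ (fun _ : Fin n => P) :=
    ∑ j, pr' j ≫ rho ι (y j) with hf
  obtain ⟨X, g, hcok⟩ := hC f
  have hιf : ∀ j, ι' j ≫ f = rho ι (y j) := by
    intro j
    rw [hf, Preadditive.comp_sum]
    rw [Finset.sum_eq_single j]
    · rw [← Category.assoc, hι', biproduct.ι_π, dif_pos rfl]
      simp
    · intro j' _ hj'
      rw [← Category.assoc, hι', biproduct.ι_π, dif_neg (Ne.symm hj')]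
      simp
    · intro h; exact absurd (Finset.mem_univ j) h
  set ψ : (Fin n → R) →ₗ[R] (P ⟶ X) := (postc P g).comp (rho ι) with hψdef
  have ψap : ∀ c, ψ c = rho ι c ≫ g := fun _ => rfl
  have ψsurj : Function.Surjective ψ := by
    intro u
    obtain ⟨v, hv⟩ := (hP.1 f g hcok).1 u
    exact ⟨sig pr v, by rw [ψap, rho_sig hsr, hv]⟩
  have hkerψ : LinearMap.ker ψ = LinearMap.ker π := by
    rw [← hy]
    apply le_antisymm
    · intro c hcmem
      have hc0 : rho ι c ≫ g = 0 := hcmem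
      obtain ⟨w, hw⟩ := (hP.1 f g hcok).2 (rho ι c) hc0
      have : c = ∑ j, toR (w ≫ pr' j) • y j := by
        have e1 : ∀ j, (y j : Fin n → R) = sig pr (rho ι (y j)) := fun j =>
          (sig_rho_biprod (y j)).symm
        calc c = sig pr (rho ι c) := (sig_rho_biprod c).symm
          _ = sig pr (∑ j, (w ≫ pr' j) ≫ (ι' j ≫ f)) := by
              rw [← hw]
              congr 1
              rw [Finset.sum_congr rfl fun (j : Fin m) _ =>
                (Category.assoc (w ≫ pr' j) (ι' j) f).symm]
              rw [← Preadditive.sum_comp, sum_factor hsr' w]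
          _ = ∑ j, toR (w ≫ pr' j) • y j := by
              rw [map_sum]
              refine Finset.sum_congr rfl fun j _ => ?_
              rw [hιf j, ← op_comp_smul, map_smul, ← e1 j]
      rw [this]
      exact Submodule.sum_mem _ fun j _ =>
        Submodule.smul_mem _ _ (Submodule.subset_span ⟨j, rfl⟩)
    · rw [Submodule.span_le]
      rintro c ⟨j, rfl⟩
      simp only [SetLike.mem_coe, LinearMap.mem_ker, ψap]
      rw [← hιf j, Category.assoc, hcok.1, Limits.comp_zero]
  refine ⟨X, ⟨?_⟩⟩
  exact (LinearMap.quotKerEquivOfSurjective ψ ψsurj).symm.trans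
    ((Submodule.quotEquivOfEq _ _ hkerψ).trans (LinearMap.quotKerEquivOfSurjective π hπ))

end EssSurj
end Aux

open PaperDefs in
theorem hom_functor_of_progenerator_is_equivalence_onto_fp_modules
    {C : Type u} [Category.{v} C] [Preadditive C] [HasFiniteBiproducts C]
    (hC : HasCokernelsP C) (P : C) (hP : IsProgenerator P) :
    (∀ X : C,
        Module.FinitePresentation (End (Opposite.op P))
          ((PaperDefs.preadditiveCoyonedaObj (Opposite.op P)).obj X)) ∧
    (PaperDefs.preadditiveCoyonedaObj (Opposite.op P)).Full ∧
    (PaperDefs.preadditiveCoyonedaObj (Opposite.op P)).Faithful ∧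
    (∀ M : ModuleCat.{v} (End (Opposite.op P)), Module.FinitePresentation (End (Opposite.op P)) M →
        ∃ X : C, Nonempty ((PaperDefs.preadditiveCoyonedaObj (Opposite.op P)).obj X ≅ M)) ∧
    Nonempty (C ≌ FPModuleCat (End (Opposite.op P))) := by
  have hfp : ∀ X : C,
      Module.FinitePresentation (End (Opposite.op P))
        ((PaperDefs.preadditiveCoyonedaObj (Opposite.op P)).obj X) := fun X => Aux.fp_hom hP X
  have hfull : (PaperDefs.preadditiveCoyonedaObj (Opposite.op P)).Full := by
    constructor
    intro X Y φ
    obtain ⟨f, hf⟩ := Aux.exists_hom_of_linear hP (φ.hom : (P ⟶ X) →ₗ[End (Opposite.op P)] (P ⟶ Y))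
    exact ⟨f, ModuleCat.hom_ext (LinearMap.ext fun u => hf u)⟩
  have hfaithful : (PaperDefs.preadditiveCoyonedaObj (Opposite.op P)).Faithful := by
    constructor
    intro X Y f f' h
    exact Aux.eq_of_comp_eq hP fun u => LinearMap.congr_fun (congrArg ModuleCat.Hom.hom h) u
  have hdense : ∀ M : ModuleCat.{v} (End (Opposite.op P)),
      Module.FinitePresentation (End (Opposite.op P)) M →
      ∃ X : C, Nonempty ((PaperDefs.preadditiveCoyonedaObj (Opposite.op P)).obj X ≅ M) := by
    intro M hM
    haveI := hM
    obtain ⟨X, ⟨eqv⟩⟩ := Aux.ess_surj hC hP (M : Type v)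
    exact ⟨X, ⟨eqv.toModuleIso⟩⟩
  refine ⟨hfp, hfull, hfaithful, hdense, ?_⟩
  letI F := PaperDefs.preadditiveCoyonedaObj (Opposite.op P)
  letI G : C ⥤ FPModuleCat (End (Opposite.op P)) :=
    ObjectProperty.lift (P := fun M : ModuleCat.{v} (End (Opposite.op P)) =>
      Module.FinitePresentation (End (Opposite.op P)) M) F hfp
  haveI : F.Full := hfull
  haveI : F.Faithful := hfaithful
  haveI : G.Full := inferInstanceAs
    ((ObjectProperty.lift (P := fun M : ModuleCat.{v} (End (Opposite.op P)) =>
      Module.FinitePresentation (End (Opposite.op P)) M) F hfp).Full)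
  haveI : G.Faithful := inferInstanceAs
    ((ObjectProperty.lift (P := fun M : ModuleCat.{v} (End (Opposite.op P)) =>
      Module.FinitePresentation (End (Opposite.op P)) M) F hfp).Faithful)
  haveI : G.EssSurj := by
    constructor
    intro M'
    obtain ⟨X, ⟨iso⟩⟩ := hdense M'.obj M'.property
    exact ⟨X, ⟨ObjectProperty.isoMk (P := fun M : ModuleCat.{v} (End (Opposite.op P)) =>
      Module.FinitePresentation (End (Opposite.op P)) M) iso⟩⟩
  haveI : G.IsEquivalence := {}
  exact ⟨G.asEquivalence⟩
end

section
/- Let C be an additive category with an automorphism Σ, and assume C has cokernels and a Σ-progenerator P. Then the orbit ring Γ(P; Σ) is strongly graded if and only if add(P) = add(Σ(P)). -/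
/-!
Statement 3. Let `C` be an additive category with an automorphism `Σ` (modelled by a shift by
`ℤ`, with `Σ = shiftFunctor C 1` and `Σⁿ = shiftFunctor C n`), and assume `C` has cokernels and
a `Σ`-progenerator `P`. Then the orbit ring `Γ(P; Σ) = ⊕ₙ C(P, Σⁿ P)ᵒᵖ` is strongly graded if
and only if `add(P) = add(Σ(P))`.
-/

open CategoryTheory CategoryTheory.Limits

universe v u

namespace OrbitDefs

open PaperDefs

variable {C : Type u} [Category.{v} C] [Preadditive C] [HasShift C ℤ]

/-- The set `{Σⁿ P | n ∈ ℤ}` of powers of the automorphism `Σ` applied to `P`. -/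
def shiftOrbit (P : C) : Set C := Set.range (fun n : ℤ => (shiftFunctor C n).obj P)

/-- `P` is a `Σ`-progenerator: a projective object such that every object admits a
right-exact presentation by objects of `add {Σⁿ P | n ∈ ℤ}`. -/
def IsSigmaProgenerator (P : C) : Prop :=
  PaperProjective P ∧
    ∀ X : C, ∃ (P₁ P₀ : C) (f : P₁ ⟶ P₀) (g : P₀ ⟶ X),
      MemAdd (shiftOrbit P) P₁ ∧ MemAdd (shiftOrbit P) P₀ ∧ IsCokernelOf f g

/-- The multiplication of the orbit ring `Γ(P; Σ) = ⊕ₙ C(P, Σⁿ P)ᵒᵖ`: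
for `f ∈ C(P, Σⁿ P)` and `g ∈ C(P, Σᵐ P)`, the product is `f·g = Σⁿ(g) ∘ f ∈ C(P, Σ^{n+m} P)`. -/
def orbitMul (P : C) (n m : ℤ) (f : P ⟶ (shiftFunctor C n).obj P)
    (g : P ⟶ (shiftFunctor C m).obj P) : P ⟶ (shiftFunctor C (n + m)).obj P :=
  f ≫ (shiftFunctor C n).map g ≫ (shiftFunctorAdd' C m n (n + m) (by omega)).inv.app P

/-- The orbit ring `Γ(P; Σ)` is strongly graded: `Γ_n Γ_m = Γ_{n+m}` for all `n, m ∈ ℤ`,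
expressed componentwise: each component `Γ_{n+m}` is generated, as an additive group, by the
products of elements of `Γ_n` and of `Γ_m`. -/
def OrbitRingStronglyGraded (P : C) : Prop :=
  ∀ n m : ℤ,
    AddSubgroup.closure
      {x : P ⟶ (shiftFunctor C (n + m)).obj P |
        ∃ (f : P ⟶ (shiftFunctor C n).obj P) (g : P ⟶ (shiftFunctor C m).obj P),
          x = orbitMul P n m f g} = ⊤

end OrbitDefs

namespace MyAux

open PaperDefs OrbitDefs

variable {C : Type u} [Category.{v} C] [Preadditive C]

lemma memAdd_singleton_iff {R Q : C} :
    MemAdd {R} Q ↔ ∃ (k : ℕ) (s : Fin k → (Q ⟶ R)) (r : Fin k → (R ⟶ Q)),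
      (∑ i, s i ≫ r i) = 𝟙 Q := by
  constructor
  · rintro ⟨k, F, hF, s, r, hsum⟩
    refine ⟨k, fun i => s i ≫ eqToHom (show F i = R from hF i),
      fun i => eqToHom (show R = F i from (hF i).symm) ≫ r i, ?_⟩
    rw [← hsum]
    refine Finset.sum_congr rfl fun i _ => ?_
    simp
  · rintro ⟨k, s, r, hsum⟩
    exact ⟨k, fun _ => R, fun _ => rfl, s, r, hsum⟩

lemma memAdd_self (Q : C) : MemAdd {Q} Q :=
  memAdd_singleton_iff.mpr ⟨1, fun _ => 𝟙 Q, fun _ => 𝟙 Q, by simp⟩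

lemma memAdd_trans {S R Q : C} (h1 : MemAdd {R} Q) (h2 : MemAdd {S} R) :
    MemAdd {S} Q := by
  rw [memAdd_singleton_iff] at h1 h2 ⊢
  obtain ⟨k, s, r, hs⟩ := h1
  obtain ⟨k', s', r', hs'⟩ := h2
  refine ⟨k * k',
    fun j => s (finProdFinEquiv.symm j).1 ≫ s' (finProdFinEquiv.symm j).2,
    fun j => r' (finProdFinEquiv.symm j).2 ≫ r (finProdFinEquiv.symm j).1, ?_⟩
  rw [show (∑ j : Fin (k * k'),
      (s (finProdFinEquiv.symm j).1 ≫ s' (finProdFinEquiv.symm j).2) ≫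
        (r' (finProdFinEquiv.symm j).2 ≫ r (finProdFinEquiv.symm j).1))
      = ∑ p : Fin k × Fin k', (s p.1 ≫ s' p.2) ≫ (r' p.2 ≫ r p.1) from
    Fintype.sum_bijective finProdFinEquiv.symm finProdFinEquiv.symm.bijective _ _
      (fun j => rfl)]
  rw [Fintype.sum_prod_type]
  have : ∀ i : Fin k, (∑ i' : Fin k', (s i ≫ s' i') ≫ (r' i' ≫ r i)) = s i ≫ r i := by
    intro i
    have : (∑ i' : Fin k', (s i ≫ s' i') ≫ (r' i' ≫ r i))
        = s i ≫ (∑ i' : Fin k', s' i' ≫ r' i') ≫ r i := by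
      rw [Preadditive.sum_comp, Preadditive.comp_sum]
      refine Finset.sum_congr rfl fun i' _ => by simp
    rw [this, hs']
    simp
  rw [Finset.sum_congr rfl fun i _ => this i, hs]

lemma memAdd_map {D : Type*} [Category D] [Preadditive D] (F : C ⥤ D) [F.Additive]
    {R Q : C} (h : MemAdd {R} Q) : MemAdd {F.obj R} (F.obj Q) := by
  rw [memAdd_singleton_iff] at h ⊢
  obtain ⟨k, s, r, hs⟩ := h
  refine ⟨k, fun i => F.map (s i), fun i => F.map (r i), ?_⟩
  rw [show (∑ i : Fin k, F.map (s i) ≫ F.map (r i)) = F.map (∑ i, s i ≫ r i) by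
    rw [F.map_sum]; exact Finset.sum_congr rfl fun i _ => (F.map_comp _ _).symm]
  rw [hs, F.map_id]

lemma memAdd_iso {R R' Q Q' : C} (eR : R ≅ R') (eQ : Q ≅ Q') (h : MemAdd {R} Q) :
    MemAdd {R'} Q' := by
  rw [memAdd_singleton_iff] at h ⊢
  obtain ⟨k, s, r, hs⟩ := h
  refine ⟨k, fun i => eQ.inv ≫ s i ≫ eR.hom, fun i => eR.inv ≫ r i ≫ eQ.hom, ?_⟩
  have : (∑ i : Fin k, (eQ.inv ≫ s i ≫ eR.hom) ≫ (eR.inv ≫ r i ≫ eQ.hom))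
      = eQ.inv ≫ (∑ i, s i ≫ r i) ≫ eQ.hom := by
    rw [Preadditive.sum_comp, Preadditive.comp_sum]
    refine Finset.sum_congr rfl fun i _ => by simp
  rw [this, hs]
  simp

lemma exists_list_of_mem_closure {A : Type*} [AddCommGroup A] {S : Set A}
    (hneg : ∀ a ∈ S, -a ∈ S) (h0 : (0 : A) ∈ S) {x : A}
    (hx : x ∈ AddSubgroup.closure S) :
    ∃ l : List A, (∀ a ∈ l, a ∈ S) ∧ l.sum = x := by
  induction hx using AddSubgroup.closure_induction with
  | mem a ha => exact ⟨[a], by simp [ha]⟩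
  | zero => exact ⟨[], by simp⟩
  | add a b _ _ iha ihb =>
      obtain ⟨l1, hl1, hs1⟩ := iha
      obtain ⟨l2, hl2, hs2⟩ := ihb
      refine ⟨l1 ++ l2, ?_, by simp [hs1, hs2]⟩
      intro a ha
      rcases List.mem_append.mp ha with h | h
      · exact hl1 _ h
      · exact hl2 _ h
  | neg a _ iha =>
      obtain ⟨l, hl, hs⟩ := iha
      refine ⟨l.map (fun y => -y), ?_, ?_⟩
      · intro a ha
        obtain ⟨b, hb, rfl⟩ := List.mem_map.mp ha
        exact hneg _ (hl _ hb)
      · have key : ∀ t : List A, (t.map (fun y => -y)).sum = -t.sum := by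
          intro t
          induction t with
          | nil => simp
          | cons hd tl ih => simp only [List.map_cons, List.sum_cons, ih]; abel
        rw [key, hs]

variable [HasShift C ℤ]

lemma shift_additive [HasFiniteBiproducts C] (n : ℤ) : (shiftFunctor C n).Additive := by
  haveI : HasBinaryBiproducts C := hasBinaryBiproducts_of_finite_biproducts C
  haveI := preservesBinaryBiproducts_of_preservesBinaryProducts (shiftFunctor C n)
  exact Functor.additive_of_preservesBinaryBiproducts (shiftFunctor C n)

/-- From strong gradedness, `P ∈ add (Σⁿ P)` for every `n`. -/
lemma sg_gives_memAdd (P : C) (h : OrbitRingStronglyGraded P) (n : ℤ) :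
    MemAdd {(shiftFunctor C n).obj P} P := by
  have h' := h n (-n)
  set S : Set (P ⟶ (shiftFunctor C (n + -n)).obj P) :=
    {x | ∃ (f : P ⟶ (shiftFunctor C n).obj P) (g : P ⟶ (shiftFunctor C (-n)).obj P),
      x = orbitMul P n (-n) f g} with hS
  have hneg : ∀ a ∈ S, -a ∈ S := by
    rintro a ⟨f, g, rfl⟩
    exact ⟨-f, g, by simp [orbitMul]⟩
  have h0 : (0 : P ⟶ (shiftFunctor C (n + -n)).obj P) ∈ S :=
    ⟨0, 0, by simp [orbitMul]⟩
  set e : P ⟶ (shiftFunctor C (n + -n)).obj P :=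
    (shiftFunctorZero' C (n + -n) (by omega)).inv.app P with he
  have hx : e ∈ AddSubgroup.closure S := by rw [h']; trivial
  obtain ⟨l, hl, hsum⟩ := exists_list_of_mem_closure hneg h0 hx
  choose f g hfg using fun (i : Fin l.length) => hl _ (l.get_mem i)
  rw [memAdd_singleton_iff]
  refine ⟨l.length, f, fun i => (shiftFunctor C n).map (g i) ≫
    (shiftFunctorAdd' C (-n) n (n + -n) (by omega)).inv.app P ≫
    (shiftFunctorZero' C (n + -n) (by omega)).hom.app P, ?_⟩
  have hterm : ∀ i : Fin l.length,
      f i ≫ (shiftFunctor C n).map (g i) ≫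
        (shiftFunctorAdd' C (-n) n (n + -n) (by omega)).inv.app P ≫
        (shiftFunctorZero' C (n + -n) (by omega)).hom.app P
      = l.get i ≫ (shiftFunctorZero' C (n + -n) (by omega)).hom.app P := by
    intro i
    rw [hfg i]
    simp [orbitMul]
  rw [Finset.sum_congr rfl fun i _ => hterm i, ← Preadditive.sum_comp]
  have hsum' : (∑ i : Fin l.length, l.get i) = l.sum := by
    conv_rhs => rw [← List.ofFn_get l]
    rw [List.sum_ofFn]
  rw [hsum', hsum, he]
  simp

/-- From `P ∈ add (Σ P)` and `Σ P ∈ add P`, deduce `P ∈ add (Σⁿ P)` for every `n`. -/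
lemma P_mem_add_shift [HasFiniteBiproducts C] (P : C)
    (h1 : MemAdd {(shiftFunctor C (1 : ℤ)).obj P} P)
    (h2 : MemAdd {P} ((shiftFunctor C (1 : ℤ)).obj P)) (n : ℤ) :
    MemAdd {(shiftFunctor C n).obj P} P := by
  induction n using Int.induction_on with
  | zero =>
      exact memAdd_iso ((shiftFunctorZero C ℤ).app P).symm (Iso.refl P) (memAdd_self P)
  | succ k ih =>
      haveI := shift_additive (C := C) (k : ℤ)
      have step : MemAdd {(shiftFunctor C ((k : ℤ) + 1)).obj P} ((shiftFunctor C (k : ℤ)).obj P) := by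
        have := memAdd_map (shiftFunctor C (k : ℤ)) h1
        exact memAdd_iso ((shiftFunctorAdd' C 1 (k : ℤ) ((k : ℤ) + 1) (by omega)).symm.app P)
          (Iso.refl _) this
      exact memAdd_trans ih step
  | pred k ih =>
      haveI := shift_additive (C := C) (-(k : ℤ) - 1)
      have step : MemAdd {(shiftFunctor C (-(k : ℤ) - 1)).obj P}
          ((shiftFunctor C (-(k : ℤ))).obj P) := by
        have := memAdd_map (shiftFunctor C (-(k : ℤ) - 1)) h2
        exact memAdd_iso (Iso.refl _)
          ((shiftFunctorAdd' C 1 (-(k : ℤ) - 1) (-(k : ℤ)) (by omega)).symm.app P) this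
      exact memAdd_trans ih step

end MyAux

open PaperDefs OrbitDefs in
theorem orbit_ring_strongly_graded_iff_add_eq
    {C : Type u} [Category.{v} C] [Preadditive C] [HasFiniteBiproducts C] [HasShift C ℤ]
    (hC : HasCokernelsP C) (P : C) (hP : IsSigmaProgenerator P) :
    OrbitRingStronglyGraded P ↔
      {Q : C | MemAdd {P} Q} = {Q : C | MemAdd {(shiftFunctor C (1 : ℤ)).obj P} Q} := by
  open MyAux in
  constructor
  · intro hsg
    have h1 : MemAdd {(shiftFunctor C (1 : ℤ)).obj P} P := sg_gives_memAdd P hsg 1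
    have h1' : MemAdd {(shiftFunctor C (-1 : ℤ)).obj P} P := sg_gives_memAdd P hsg (-1)
    haveI := shift_additive (C := C) (1 : ℤ)
    have h2 : MemAdd {P} ((shiftFunctor C (1 : ℤ)).obj P) := by
      have := memAdd_map (shiftFunctor C (1 : ℤ)) h1'
      exact memAdd_iso ((shiftFunctorCompIsoId C (-1 : ℤ) (1 : ℤ) (by omega)).app P)
        (Iso.refl _) this
    ext Q
    constructor
    · exact fun hQ => memAdd_trans hQ h1
    · exact fun hQ => memAdd_trans hQ h2
  · intro hset
    have h1 : MemAdd {(shiftFunctor C (1 : ℤ)).obj P} P := by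
      have : P ∈ {Q : C | MemAdd {P} Q} := memAdd_self P
      rw [hset] at this; exact this
    have h2 : MemAdd {P} ((shiftFunctor C (1 : ℤ)).obj P) := by
      have : (shiftFunctor C (1 : ℤ)).obj P ∈
          {Q : C | MemAdd {(shiftFunctor C (1 : ℤ)).obj P} Q} := memAdd_self _
      rw [← hset] at this; exact this
    intro n m
    rw [AddSubgroup.eq_top_iff']
    intro x
    obtain ⟨k, s, r, hs⟩ := memAdd_singleton_iff.mp (P_mem_add_shift P h1 h2 n)
    set g : Fin k → (P ⟶ (shiftFunctor C m).obj P) := fun i =>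
      (shiftFunctor C n).preimage
        (r i ≫ x ≫ (shiftFunctorAdd' C m n (n + m) (by omega)).hom.app P) with hg
    have hx : x = ∑ i : Fin k, orbitMul P n m (s i) (g i) := by
      have hterm : ∀ i : Fin k, orbitMul P n m (s i) (g i) = s i ≫ r i ≫ x := by
        intro i
        rw [orbitMul, hg]
        rw [Functor.map_preimage]
        simp
      rw [Finset.sum_congr rfl fun i _ => hterm i]
      rw [show (∑ i : Fin k, s i ≫ r i ≫ x) = (∑ i : Fin k, s i ≫ r i) ≫ x by
        rw [Preadditive.sum_comp]; exact Finset.sum_congr rfl fun i _ => by simp]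
      rw [hs]; simp
    rw [hx]
    exact AddSubgroup.sum_mem _ fun i _ => AddSubgroup.subset_closure ⟨s i, g i, rfl⟩
end
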